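/- Let $\Psi=e^\psi-1$ be an Orlicz function. The condition (HJ): there exists $K>0$ with $\psi(su)\le K(s\ln(1+s)+s\psi(u))$ for all $s,u\ge K$, is equivalent to the condition (HJ'): there exists $K'>0$ with $\Psi(su)\le(s\Psi(u))^{K's}$ for all $s,u\ge K'$. -/

import Mathlib

open MeasureTheory ProbabilityTheory

/-- An Orlicz function: convex, strictly increasing on `[0,∞)`, vanishing at `0`. -/
def IsOrlicz (Ψ : ℝ → ℝ) : Prop :=
  ConvexOn ℝ (Set.Ici 0) Ψ ∧ StrictMonoOn Ψ (Set.Ici 0) ∧ Ψ 0 = 0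

/-- The associated exponent `ψ` with `Ψ = e^ψ - 1`. -/
noncomputable def orliczExp (Ψ : ℝ → ℝ) (x : ℝ) : ℝ := Real.log (1 + Ψ x)

/-- The Orlicz (Luxemburg) norm of a Banach-space-valued random variable. -/
noncomputable def orliczNorm {Ω : Type*} [MeasurableSpace Ω] (μ : Measure Ω)
    (Ψ : ℝ → ℝ) {F : Type*} [NormedAddCommGroup F] (X : Ω → F) : ℝ :=
  sInf {a : ℝ | 0 < a ∧ ∫⁻ ω, ENNReal.ofReal (Ψ (‖X ω‖ / a)) ∂μ ≤ 1}

/-- `X` has finite Orlicz norm. -/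
def OrliczFinite {Ω : Type*} [MeasurableSpace Ω] (μ : Measure Ω)
    (Ψ : ℝ → ℝ) {F : Type*} [NormedAddCommGroup F] (X : Ω → F) : Prop :=
  ∃ a : ℝ, 0 < a ∧ ∫⁻ ω, ENNReal.ofReal (Ψ (‖X ω‖ / a)) ∂μ ≤ 1

/-- Condition (HJ): `ψ(su) ≤ K (s ln(1+s) + s ψ(u))` for all `s, u ≥ K`. -/
def HJCond (Ψ : ℝ → ℝ) : Prop :=
  ∃ K > (0:ℝ), ∀ s u : ℝ, K ≤ s → K ≤ u →
    orliczExp Ψ (s * u) ≤ K * (s * Real.log (1 + s) + s * orliczExp Ψ u)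

/-- A Rademacher (symmetric ±1) random variable. -/
def IsRademacher {Ω : Type*} [MeasurableSpace Ω] (μ : Measure Ω) (ε : Ω → ℝ) : Prop :=
  μ {ω | ε ω = 1} = 1/2 ∧ μ {ω | ε ω = -1} = 1/2

/-- Condition (HJ) is equivalent to (HJ'): `Ψ(su) ≤ (s Ψ(u))^(K's)` for `s,u ≥ K'`. -/
theorem stmt6 {Ψ : ℝ → ℝ} (hΨ : IsOrlicz Ψ) :
    HJCond Ψ ↔
      ∃ K' > (0:ℝ), ∀ s u : ℝ, K' ≤ s → K' ≤ u →
        Ψ (s * u) ≤ (s * Ψ u) ^ (K' * s) := by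
  obtain ⟨hconv, hmono, h0⟩ := hΨ
  have hnn : ∀ x : ℝ, 0 ≤ x → 0 ≤ Ψ x := by
    intro x hx
    rcases eq_or_lt_of_le hx with h | h
    · simp [← h, h0]
    · have := hmono Set.self_mem_Ici (Set.mem_Ici.2 hx) h
      linarith [h0 ▸ this]
  have hgrow : ∀ x : ℝ, 1 ≤ x → x * Ψ 1 ≤ Ψ x := by
    intro x hx
    have hx0 : (0:ℝ) < x := by linarith
    have ha : (0:ℝ) ≤ 1 - 1/x := by
      have : 1/x ≤ 1 := by
        rw [div_le_one hx0]; linarith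
      linarith
    have hb : (0:ℝ) ≤ 1/x := by positivity
    have hab : (1 - 1/x) + 1/x = 1 := by ring
    have hc := hconv.2 Set.self_mem_Ici (Set.mem_Ici.2 (by linarith : (0:ℝ) ≤ x)) ha hb hab
    have heq : (1 - 1/x) • (0:ℝ) + (1/x) • x = 1 := by
      simp only [smul_eq_mul]; field_simp; ring
    rw [heq] at hc
    have : Ψ 1 ≤ (1 - 1/x) * Ψ 0 + (1/x) * Ψ x := hc
    rw [h0] at this
    have h2 : Ψ 1 ≤ (1/x) * Ψ x := by linarith
    calc x * Ψ 1 ≤ x * ((1/x) * Ψ x) := by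
          exact mul_le_mul_of_nonneg_left h2 (le_of_lt hx0)
      _ = Ψ x := by field_simp
  have hc1 : 0 < Ψ 1 := by
    have := hmono Set.self_mem_Ici (Set.mem_Ici.2 zero_le_one) zero_lt_one
    linarith [h0 ▸ this]
  constructor
  · rintro ⟨K, hK, hHJ⟩
    set K' : ℝ := max (2*K) (max 4 (max K (1/Ψ 1))) with hK'def
    have hK'pos : 0 < K' := lt_of_lt_of_le (by linarith) (le_max_left _ _)
    refine ⟨K', hK'pos, ?_⟩
    intro s u hs hu
    have hs2K : 2*K ≤ s := le_trans (le_max_left _ _) hs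
    have hs4 : (4:ℝ) ≤ s := le_trans (le_trans (le_max_left _ _) (le_max_right _ _)) hs
    have hsK : K ≤ s := le_trans (le_trans (le_trans (le_max_left _ _) (le_max_right _ _)) (le_max_right _ _)) hs
    have hu4 : (4:ℝ) ≤ u := le_trans (le_trans (le_max_left _ _) (le_max_right _ _)) hu
    have huK : K ≤ u := le_trans (le_trans (le_trans (le_max_left _ _) (le_max_right _ _)) (le_max_right _ _)) hu
    have huc : 1/Ψ 1 ≤ u := le_trans (le_trans (le_trans (le_max_right _ _) (le_max_right _ _)) (le_max_right _ _)) hu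
    -- Ψ u ≥ 1
    have hΨu1 : (1:ℝ) ≤ Ψ u := by
      have h1 := hgrow u (by linarith)
      have : (1/Ψ 1) * Ψ 1 ≤ u * Ψ 1 := mul_le_mul_of_nonneg_right huc (le_of_lt hc1)
      rw [one_div_mul_cancel (ne_of_gt hc1)] at this
      linarith
    have hΨsu : 0 ≤ Ψ (s*u) := hnn _ (by positivity)
    set A : ℝ := s * Ψ u with hAdef
    have hA4 : (4:ℝ) ≤ A := by
      calc (4:ℝ) = 4 * 1 := by ring
        _ ≤ s * Ψ u := mul_le_mul hs4 hΨu1 zero_le_one (by linarith)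
    have hApos : (0:ℝ) < A := by linarith
    have hlogA : Real.log 4 ≤ Real.log A := Real.log_le_log (by norm_num) hA4
    have hlogApos : 0 < Real.log A := lt_of_lt_of_le (Real.log_pos (by norm_num)) hlogA
    -- product bound
    have hprod : (1+s) * (1+Ψ u) ≤ A^2 := by
      have h1 : 1 + s ≤ 2*s := by linarith
      have h2 : 1 + Ψ u ≤ 2 * Ψ u := by linarith
      have h3 : (1+s)*(1+Ψ u) ≤ (2*s)*(2*Ψ u) :=
        mul_le_mul h1 h2 (by linarith) (by linarith)
      have h4 : (2*s)*(2*Ψ u) = 4 * A := by rw [hAdef]; ring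
      have h5 : 4 * A ≤ A^2 := by nlinarith
      linarith
    have hψ := hHJ s u hsK huK
    unfold orliczExp at hψ
    have hlogsum : Real.log (1+s) + Real.log (1+Ψ u) ≤ 2 * Real.log A := by
      have e1 : Real.log (1+s) + Real.log (1+Ψ u) = Real.log ((1+s)*(1+Ψ u)) := by
        rw [Real.log_mul (by linarith) (by linarith)]
      rw [e1]
      have e2 : Real.log ((1+s)*(1+Ψ u)) ≤ Real.log (A^2) :=
        Real.log_le_log (by nlinarith) hprod
      rw [Real.log_pow] at e2
      push_cast at e2
      linarith
    have key : Real.log (1 + Ψ (s*u)) ≤ K' * s * Real.log A := by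
      have h1 : Real.log (1 + Ψ (s*u)) ≤ K * s * (Real.log (1+s) + Real.log (1+Ψ u)) := by
        calc Real.log (1 + Ψ (s*u)) ≤ K * (s * Real.log (1+s) + s * Real.log (1+Ψ u)) := hψ
          _ = K * s * (Real.log (1+s) + Real.log (1+Ψ u)) := by ring
      have h2 : K * s * (Real.log (1+s) + Real.log (1+Ψ u)) ≤ K * s * (2 * Real.log A) :=
        mul_le_mul_of_nonneg_left hlogsum (by positivity)
      have h3 : K * s * (2 * Real.log A) = (2*K) * s * Real.log A := by ring
      have h4 : (2*K) * s * Real.log A ≤ K' * s * Real.log A := by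
        have : (2*K) ≤ K' := le_max_left _ _
        have hs0 : 0 ≤ s := by linarith
        nlinarith [mul_le_mul_of_nonneg_right this (mul_nonneg hs0 hlogApos.le)]
      linarith
    have hrpow : (s * Ψ u) ^ (K' * s) = Real.exp (K' * s * Real.log A) := by
      rw [Real.rpow_def_of_pos hApos, mul_comm]
    rw [hrpow]
    calc Ψ (s*u) ≤ 1 + Ψ (s*u) := by linarith
      _ = Real.exp (Real.log (1 + Ψ (s*u))) := (Real.exp_log (by linarith)).symm
      _ ≤ Real.exp (K' * s * Real.log A) := Real.exp_le_exp.2 key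
  · rintro ⟨K', hK', hHJ'⟩
    refine ⟨K' + 1, by linarith, ?_⟩
    intro s u hs hu
    have hsK' : K' ≤ s := by linarith
    have huK' : K' ≤ u := by linarith
    have hs1 : (1:ℝ) ≤ s := by linarith
    have hu0 : (0:ℝ) < u := by linarith
    have hΨupos : 0 < Ψ u := by
      have := hmono Set.self_mem_Ici (Set.mem_Ici.2 (le_of_lt hu0)) hu0
      linarith [h0 ▸ this]
    have hΨsu : 0 ≤ Ψ (s*u) := hnn _ (by positivity)
    set A : ℝ := s * Ψ u with hAdef
    have hApos : 0 < A := by positivity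
    have hbd := hHJ' s u hsK' huK'
    rw [Real.rpow_def_of_pos hApos, mul_comm (Real.log A)] at hbd
    set t : ℝ := K' * s * Real.log A with htdef
    unfold orliczExp
    have hlog1s : 0 ≤ Real.log (1+s) := Real.log_nonneg (by linarith)
    have hlog1Ψu : 0 ≤ Real.log (1+Ψ u) := Real.log_nonneg (by linarith)
    have hlog2 : Real.log 2 ≤ s * Real.log (1+s) := by
      have h1 : Real.log 2 ≤ Real.log (1+s) := Real.log_le_log (by norm_num) (by linarith)
      nlinarith
    have hmax : max 0 t ≤ K' * s * (Real.log (1+s) + Real.log (1+Ψ u)) := by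
      apply max_le
      · positivity
      · rw [htdef, hAdef, Real.log_mul (by linarith) (ne_of_gt hΨupos)]
        have h1 : Real.log s ≤ Real.log (1+s) := Real.log_le_log (by linarith) (by linarith)
        have h2 : Real.log (Ψ u) ≤ Real.log (1+Ψ u) := Real.log_le_log hΨupos (by linarith)
        have : Real.log s + Real.log (Ψ u) ≤ Real.log (1+s) + Real.log (1+Ψ u) := by linarith
        have hK's : 0 ≤ K' * s := by positivity
        nlinarith
    have hstep : Real.log (1 + Ψ (s*u)) ≤ Real.log 2 + max 0 t := by
      have h1 : 1 + Ψ (s*u) ≤ 2 * Real.exp (max 0 t) := by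
        have e1 : (1:ℝ) ≤ Real.exp (max 0 t) := by
          rw [← Real.exp_zero]; exact Real.exp_le_exp.2 (le_max_left _ _)
        have e2 : Real.exp t ≤ Real.exp (max 0 t) := Real.exp_le_exp.2 (le_max_right _ _)
        linarith
      calc Real.log (1 + Ψ (s*u)) ≤ Real.log (2 * Real.exp (max 0 t)) :=
            Real.log_le_log (by linarith) h1
        _ = Real.log 2 + max 0 t := by
            rw [Real.log_mul (by norm_num) (ne_of_gt (Real.exp_pos _)), Real.log_exp]
    have final : Real.log (1 + Ψ (s*u)) ≤
        (K'+1) * (s * Real.log (1+s) + s * Real.log (1+Ψ u)) := by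
      have h1 : K' * s * (Real.log (1+s) + Real.log (1+Ψ u))
          = K' * (s * Real.log (1+s) + s * Real.log (1+Ψ u)) := by ring
      have h2 : 0 ≤ s * Real.log (1+Ψ u) := by positivity
      have h3 : 0 ≤ s * Real.log (1+s) := by positivity
      nlinarith [hstep, hmax]
    exact final
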